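/- Let T = ⟨Γ, L, R⟩ be a rule system on presheaves over a small category C, with Γ small, and let p be a presheaf such that every object of L/p admits a morphism into some maximal object of L/p. Let W be the wide subcategory of L/p having all objects and, as non-identity morphisms, exactly the morphisms of L/p whose target is a maximal object. Then the canonical morphism from the colimit of the restriction of D_T(p) to W into the colimit T̄(p) = Colim(D_T(p)), induced by the inclusion W ⥤ L/p, is an isomorphism. -/

import Mathlib

open CategoryTheory CategoryTheory.Limits

universe u

variable (C : Type u) [SmallCategory C]

/-- The category of presheaves over `C`. -/
abbrev GM := Cᵒᵖ ⥤ Type u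

/-- A rule system `⟨Γ, L, R⟩` on presheaves over `C`: a small category `Γ` of rules,
a full and faithful left-hand-side functor `L` sending every morphism to a monomorphism,
and a right-hand-side functor `R` sending every morphism to a monomorphism. -/
structure RuleSystem where
  Γ : Type u
  [catΓ : SmallCategory Γ]
  L : Γ ⥤ GM C
  R : Γ ⥤ GM C
  [fullL : L.Full]
  [faithfulL : L.Faithful]
  monoL : ∀ {a b : Γ} (e : a ⟶ b), Mono (L.map e)
  monoR : ∀ {a b : Γ} (e : a ⟶ b), Mono (R.map e)

attribute [instance] RuleSystem.catΓ RuleSystem.fullL RuleSystem.faithfulL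

variable {C}

/-- The instance category `L/p`: objects are pairs `⟨γ, m⟩` with `m : L(γ) ⟶ p` a
monomorphism; morphisms `⟨γ, m⟩ ⟶ ⟨γ', m'⟩` are the morphisms `e : γ ⟶ γ'` of `Γ` with
`m' ∘ L(e) = m`. -/
def Inst (T : RuleSystem C) (p : GM C) :=
  ObjectProperty.FullSubcategory (fun f : CostructuredArrow T.L p => Mono f.hom)

instance (T : RuleSystem C) (p : GM C) : Category (Inst T p) :=
  ObjectProperty.FullSubcategory.category _

/-- The diagram `D_T(p) : L/p ⥤ GM` sending `⟨γ, m⟩` to `R(γ)` and `e` to `R(e)`. -/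
def DT (T : RuleSystem C) (p : GM C) : Inst T p ⥤ GM C :=
  ObjectProperty.ι _ ⋙ CostructuredArrow.proj T.L p ⋙ T.R

/-- An object of the instance category is maximal if every morphism out of it admits a
morphism back. -/
def MaximalInst {T : RuleSystem C} {p : GM C} (n : Inst T p) : Prop :=
  ∀ m : Inst T p, (n ⟶ m) → Nonempty (m ⟶ n)


/-- The wide subcategory `W` of the instance category `L/p`: it has all objects of `L/p`
(wrapped), and its morphisms are the identities together with exactly the morphisms of
`L/p` whose target is a maximal object. -/
structure WideCat (T : RuleSystem C) (p : GM C) where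
  obj : Inst T p

instance (T : RuleSystem C) (p : GM C) : Category (WideCat T p) where
  Hom n n' := {e : n.obj ⟶ n'.obj // MaximalInst n'.obj ∨ n = n'}
  id n := ⟨𝟙 n.obj, Or.inr rfl⟩
  comp {n n' n''} e f := ⟨e.1 ≫ f.1, by
    rcases f.2 with h | h
    · exact Or.inl h
    · rcases e.2 with h' | h'
      · exact Or.inl (h ▸ h')
      · exact Or.inr (h'.trans h)⟩
  id_comp f := Subtype.ext (Category.id_comp _)
  comp_id f := Subtype.ext (Category.comp_id _)
  assoc f g h := Subtype.ext (Category.assoc _ _ _)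

/-- The inclusion functor `W ⥤ L/p`. -/
def wideIncl (T : RuleSystem C) (p : GM C) : WideCat T p ⥤ Inst T p where
  obj n := n.obj
  map e := e.1
/-- if every object of the instance category `L/p` admits a morphism into some
maximal object, then the canonical morphism — induced by the inclusion `W ⥤ L/p` of the
wide subcategory of morphisms into maximal objects — from the colimit of the restriction of
`D_T(p)` to `W` into the colimit `T̄(p) = colimit (D_T(p))` is an isomorphism. -/
theorem stmt5 (T : RuleSystem C) (p : GM C)
    (hmax : ∀ n : Inst T p, ∃ m : Inst T p, MaximalInst m ∧ Nonempty (n ⟶ m)) :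
    IsIso (colimit.pre (DT T p) (wideIncl T p)) := by
  haveI : (wideIncl T p).Final := by
    constructor
    intro d
    let k : StructuredArrow d (wideIncl T p) :=
      StructuredArrow.mk (Y := ⟨d⟩) (show d ⟶ (wideIncl T p).obj ⟨d⟩ from 𝟙 d)
    have conn : ∀ j : StructuredArrow d (wideIncl T p), Zigzag j k := by
      intro j
      obtain ⟨m, hm, ⟨e⟩⟩ := hmax j.right.obj
      let t : StructuredArrow d (wideIncl T p) :=
        StructuredArrow.mk (Y := ⟨m⟩)
          (show d ⟶ (wideIncl T p).obj ⟨m⟩ from j.hom ≫ e)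
      have h1 : j ⟶ t := StructuredArrow.homMk ⟨e, Or.inl hm⟩ (by
        simp [t, wideIncl])
      have h2 : k ⟶ t := StructuredArrow.homMk ⟨j.hom ≫ e, Or.inl hm⟩ (by
        simp [k, t, wideIncl])
      exact Relation.ReflTransGen.trans
        (Relation.ReflTransGen.single (Or.inl ⟨h1⟩))
        (Relation.ReflTransGen.single (Or.inr ⟨h2⟩))
    have : Nonempty (StructuredArrow d (wideIncl T p)) := ⟨k⟩
    exact zigzag_isConnected (fun j₁ j₂ => (conn j₁).trans (zigzag_symmetric.symm _ _ (conn j₂)))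
  infer_instance
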